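/- Let M be a complete, separable, compactly injective metric space, let (Kₙ) be a sequence of nonempty compact subsets of M, and let h : M → ℝ be continuous with h > 0. Then there exist compact subsets Lₙ ⊆ M and continuous maps fₙ : Kₙ → Lₙ with fₙ(Kₙ) = Lₙ such that d(x, fₙ(x)) = h(x) for all x ∈ Kₙ, and moreover d(fₙ(x), y) ≥ h(x) for all x ∈ Kₙ and all y ∈ ⋃_{i<n} Lᵢ. -/

import Mathlib

/-- A metric space `M` is compactly injective if every distance-preserving map
from a compact subspace of a compact metric space into `M` extends to a
distance-preserving map of the whole compact space. -/
def CompactlyInjective (M : Type*) [MetricSpace M] : Prop :=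
  ∀ (L : Type) (_ : MetricSpace L) (_ : CompactSpace L) (K : Set L), IsCompact K →
    ∀ f : K → M, Isometry f → ∃ g : L → M, Isometry g ∧ ∀ x : K, g x = f x

open Set

section Extend

variable {M : Type*} [MetricSpace M]

/-- Compact injectivity works for compact spaces in any universe, via the
Kuratowski embedding into `ℓ^∞(ℕ)`. -/
theorem compactlyInjective_extend (hM : CompactlyInjective M)
    (Z : Type*) [MetricSpace Z] [CompactSpace Z] (Ks : Set Z) (hKs : IsCompact Ks)
    (f : Ks → M) (hf : Isometry f) :
    ∃ g : Z → M, Isometry g ∧ ∀ x : Ks, g x = f x := by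
  haveI : TopologicalSpace.SeparableSpace Z := inferInstance
  have hψ : Isometry (kuratowskiEmbedding Z) := kuratowskiEmbedding.isometry Z
  let e := hψ.isometryEquivOnRange
  let Z₀ := ↥(Set.range (kuratowskiEmbedding Z))
  haveI : CompactSpace Z₀ := isCompact_iff_compactSpace.mp (isCompact_range hψ.continuous)
  let K₀ : Set Z₀ := ⇑e '' Ks
  have hK₀ : IsCompact K₀ := hKs.image e.continuous
  have hmem : ∀ k : K₀, (e.symm k.1 : Z) ∈ Ks := by
    rintro ⟨k, z, hz, rfl⟩; simpa using hz
  let f₀ : K₀ → M := fun k => f ⟨e.symm k.1, hmem k⟩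
  have hf₀ : Isometry f₀ := by
    intro a b
    show edist (f ⟨e.symm a.1, hmem a⟩) (f ⟨e.symm b.1, hmem b⟩) = edist a b
    rw [hf.edist_eq, Subtype.edist_eq, Subtype.edist_eq]
    show edist (e.symm a.1) (e.symm b.1) = edist a.1 b.1
    exact e.symm.isometry.edist_eq _ _
  obtain ⟨g₀, hg₀, hg₀K⟩ := hM Z₀ inferInstance inferInstance K₀ hK₀ f₀ hf₀
  refine ⟨fun z => g₀ (e z), hg₀.comp e.isometry, ?_⟩
  intro x
  have hxK : (e x.1 : Z₀) ∈ K₀ := ⟨x.1, x.2, rfl⟩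
  have := hg₀K ⟨e x.1, hxK⟩
  show g₀ (e x.1) = f x
  rw [this]
  show f ⟨e.symm (e x.1), _⟩ = f x
  congr 1
  exact Subtype.ext (e.symm_apply_apply x.1)

end Extend

section Glue

variable {M : Type*} [MetricSpace M]

/-- A type synonym for the glued space: a compact set `C` together with an abstract
copy of `A`, pushed away from `C` according to the function `h`. -/
def Glue (M : Type*) [MetricSpace M] (A C : Set M) : Type _ := ↥C ⊕ ↥A

variable {A C : Set M}

/-- Inclusion of `C` into the glued space. -/
def Glue.inl (c : ↥C) : Glue M A C := Sum.inl c

/-- Inclusion of the copy of `A` into the glued space. -/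
def Glue.inr (a : ↥A) : Glue M A C := Sum.inr a

/-- The distance on the glued space. -/
noncomputable def glueDist (h : M → ℝ) : Glue M A C → Glue M A C → ℝ := fun x y =>
  match x, y with
  | Sum.inl c, Sum.inl c' => dist (c : M) (c' : M)
  | Sum.inl c, Sum.inr a => h a + dist (a : M) (c : M)
  | Sum.inr a, Sum.inl c => h a + dist (a : M) (c : M)
  | Sum.inr a, Sum.inr b => |h a - h b| + dist (a : M) (b : M)

theorem glueDist_self (h : M → ℝ) :
    ∀ x : ↥C ⊕ ↥A, glueDist (A := A) (C := C) h x x = 0 := by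
  rintro (c | a) <;> simp [glueDist]

theorem glueDist_comm (h : M → ℝ) :
    ∀ x y : ↥C ⊕ ↥A, glueDist (A := A) (C := C) h x y = glueDist (A := A) (C := C) h y x := by
  rintro (c | a) (c' | b) <;> simp [glueDist, dist_comm, abs_sub_comm]

theorem glueDist_triangle (h : M → ℝ) (hpos : ∀ x : M, 0 < h x) :
    ∀ x y z : ↥C ⊕ ↥A, glueDist (A := A) (C := C) h x z ≤
      glueDist (A := A) (C := C) h x y + glueDist (A := A) (C := C) h y z := by
  rintro (c | a) (c' | b) (c'' | d) <;> simp only [glueDist]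
  · exact dist_triangle _ _ _
  · linarith [dist_triangle (d : M) (c' : M) (c : M), dist_comm (c : M) (c' : M)]
  · linarith [dist_triangle (c : M) (b : M) (c'' : M), dist_comm (b : M) (c : M),
      (hpos (b : M)).le]
  · linarith [neg_le_abs (h (b : M) - h (d : M)), dist_triangle (d : M) (b : M) (c : M),
      dist_comm (d : M) (b : M)]
  · linarith [dist_triangle (a : M) (c' : M) (c'' : M)]
  · have h1 := (hpos (a : M)).le
    have h2 := (hpos (d : M)).le
    have habs : |h (a : M) - h (d : M)| ≤ h (a : M) + h (d : M) :=
      abs_le.mpr ⟨by linarith, by linarith⟩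
    linarith [dist_triangle (a : M) (c' : M) (d : M), dist_comm (c' : M) (d : M)]
  · linarith [le_abs_self (h (a : M) - h (b : M)), dist_triangle (a : M) (b : M) (c'' : M)]
  · linarith [abs_sub_le (h (a : M)) (h (b : M)) (h (d : M)),
      dist_triangle (a : M) (b : M) (d : M)]

theorem glueDist_eq_zero (h : M → ℝ) (hpos : ∀ x : M, 0 < h x) :
    ∀ x y : ↥C ⊕ ↥A, glueDist (A := A) (C := C) h x y = 0 → x = y := by
  rintro (c | a) (c' | b) hxy <;> simp only [glueDist] at hxy
  · exact congrArg Sum.inl (Subtype.ext (dist_eq_zero.mp hxy))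
  · exfalso
    have h1 := hpos (b : M)
    have h2 := dist_nonneg (x := (b : M)) (y := (c : M))
    linarith
  · exfalso
    have h1 := hpos (a : M)
    have h2 := dist_nonneg (x := (a : M)) (y := (c' : M))
    linarith
  · have hd : dist (a : M) (b : M) = 0 := by
      have := abs_nonneg (h (a : M) - h (b : M))
      have := dist_nonneg (x := (a : M)) (y := (b : M))
      linarith
    exact congrArg Sum.inr (Subtype.ext (dist_eq_zero.mp hd))

/-- The metric space structure on the glued space. -/
noncomputable def glueMetric (h : M → ℝ) (hpos : ∀ x : M, 0 < h x) (A C : Set M) :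
    MetricSpace (Glue M A C) where
  dist := glueDist h
  dist_self := glueDist_self h
  dist_comm := glueDist_comm h
  dist_triangle := glueDist_triangle h hpos
  eq_of_dist_eq_zero := fun {x y} => glueDist_eq_zero h hpos x y

/-- One step of the construction: given a compact set `A` contained in a compact
set `C`, we may push `A` off of `C` by the function `h`. -/
theorem step (hM : CompactlyInjective M) (h : M → ℝ) (hc : Continuous h)
    (hpos : ∀ x : M, 0 < h x) (A C : Set M) (hA : IsCompact A) (hC : IsCompact C)
    (hAC : A ⊆ C) :
    ∃ f : A → M, Continuous f ∧ (∀ x : A, dist (x : M) (f x) = h x) ∧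
      ∀ (x : A), ∀ c ∈ C, h (x : M) ≤ dist (f x) c := by
  letI : MetricSpace (Glue M A C) := glueMetric h hpos A C
  have hdist : ∀ x y : Glue M A C, dist x y = glueDist (A := A) (C := C) h x y := fun _ _ => rfl
  haveI : CompactSpace ↥C := isCompact_iff_compactSpace.mp hC
  haveI : CompactSpace ↥A := isCompact_iff_compactSpace.mp hA
  -- inclusions are continuous
  have hinl : Isometry (Glue.inl (M := M) (A := A) (C := C)) :=
    Isometry.of_dist_eq fun c c' => rfl
  have hinr : Continuous (Glue.inr (M := M) (A := A) (C := C)) := by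
    rw [Metric.continuous_iff]
    intro b ε hε
    obtain ⟨δ₁, hδ₁, hδ₁'⟩ := Metric.continuous_iff.mp hc (b : M) (ε / 2) (by linarith)
    refine ⟨min δ₁ (ε / 2), by positivity, fun a ha => ?_⟩
    have hshow : dist (Glue.inr (M := M) (A := A) (C := C) a) (Glue.inr b) =
        |h (a : M) - h (b : M)| + dist (a : M) (b : M) := rfl
    rw [hshow]
    have h1 : dist (a : M) (b : M) < δ₁ := lt_of_lt_of_le ha (min_le_left _ _)
    have h2 : dist (a : M) (b : M) < ε / 2 := lt_of_lt_of_le ha (min_le_right _ _)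
    have h3 := hδ₁' (a : M) h1
    rw [Real.dist_eq] at h3
    linarith
  have helim : ∀ z : ↥C ⊕ ↥A,
      Sum.elim (Glue.inl (M := M) (A := A) (C := C)) Glue.inr z = z := by
    rintro (c | a) <;> rfl
  -- the glued space is compact
  haveI : CompactSpace (Glue M A C) := by
    constructor
    have hcont : Continuous
        (Sum.elim (Glue.inl (M := M) (A := A) (C := C)) Glue.inr) :=
      continuous_sumElim.mpr ⟨hinl.continuous, hinr⟩
    have himg := (isCompact_univ (X := ↥C ⊕ ↥A)).image hcont
    have heq : Sum.elim (Glue.inl (M := M) (A := A) (C := C)) Glue.inr '' univ = univ := by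
      apply eq_univ_of_forall
      intro z
      exact ⟨z, mem_univ _, helim z⟩
    rwa [heq] at himg
  -- the copy of `C` inside the glued space
  set KZ : Set (Glue M A C) := Set.range (Glue.inl (M := M) (A := A) (C := C)) with hKZ
  have hKZc : IsCompact KZ := isCompact_range hinl.continuous
  -- projection back to M
  have hproj : ∀ k : KZ, ∃ c : ↥C, Glue.inl c = k.1 := fun k => k.2
  choose cOf hcOf using hproj
  let fK : KZ → M := fun k => (cOf k : M)
  have hfK : Isometry fK := by
    apply Isometry.of_dist_eq
    intro k k'
    have hx : dist (k : Glue M A C) (k' : Glue M A C) = dist (cOf k : M) (cOf k' : M) := by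
      rw [← hcOf k, ← hcOf k']
      rfl
    rw [Subtype.dist_eq, hx]
  obtain ⟨g, hg, hgK⟩ := compactlyInjective_extend hM (Glue M A C) KZ hKZc fK hfK
  -- g agrees with the identity on the copy of C
  have hgC : ∀ c : ↥C, g (Glue.inl c) = (c : M) := by
    intro c
    have hmem : Glue.inl (M := M) (A := A) (C := C) c ∈ KZ := ⟨c, rfl⟩
    have h1 := hgK ⟨Glue.inl c, hmem⟩
    have h3 : Glue.inl (M := M) (A := A) (C := C) (cOf ⟨Glue.inl c, hmem⟩) = Glue.inl c :=
      hcOf ⟨Glue.inl c, hmem⟩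
    have h4 : cOf ⟨Glue.inl c, hmem⟩ = c := Sum.inl_injective h3
    rw [h1]
    show (cOf ⟨Glue.inl c, hmem⟩ : M) = (c : M)
    rw [h4]
  refine ⟨fun a => g (Glue.inr a), hg.continuous.comp hinr, ?_, ?_⟩
  · intro x
    have hx : dist ((x : M)) (g (Glue.inr x)) =
        dist (g (Glue.inl ⟨(x : M), hAC x.2⟩)) (g (Glue.inr x)) := by
      rw [hgC ⟨(x : M), hAC x.2⟩]
    rw [hx, hg.dist_eq]
    show h (x : M) + dist (x : M) (x : M) = h (x : M)
    simp
  · intro x c hcC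
    have hx : dist (g (Glue.inr x)) c =
        dist (g (Glue.inr x)) (g (Glue.inl ⟨c, hcC⟩)) := by
      rw [hgC ⟨c, hcC⟩]
    rw [hx, hg.dist_eq]
    show h (x : M) ≤ h (x : M) + dist (x : M) c
    have := dist_nonneg (x := (x : M)) (y := c)
    linarith

end Glue

section Seq

variable {M : Type*} [MetricSpace M] (hM : CompactlyInjective M) (K : ℕ → Set M)
  (hKc : ∀ n, IsCompact (K n)) (h : M → ℝ) (hc : Continuous h) (hpos : ∀ x : M, 0 < h x)

/-- One step of the recursion: given an accumulated compact set, produce the next map. -/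
noncomputable def stepFun (n : ℕ) (C : {C : Set M // IsCompact C}) : ↥(K n) → M :=
  Classical.choose (step hM h hc hpos (K n) (K n ∪ C.1) (hKc n) ((hKc n).union C.2)
    Set.subset_union_left)

theorem stepFun_spec (n : ℕ) (C : {C : Set M // IsCompact C}) :
    Continuous (stepFun hM K hKc h hc hpos n C) ∧
    (∀ x : K n, dist (x : M) (stepFun hM K hKc h hc hpos n C x) = h x) ∧
    ∀ (x : K n), ∀ c ∈ K n ∪ C.1, h (x : M) ≤ dist (stepFun hM K hKc h hc hpos n C x) c :=
  Classical.choose_spec (step hM h hc hpos (K n) (K n ∪ C.1) (hKc n) ((hKc n).union C.2)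
    Set.subset_union_left)

theorem isCompact_range_stepFun (n : ℕ) (C : {C : Set M // IsCompact C}) :
    IsCompact (Set.range (stepFun hM K hKc h hc hpos n C)) := by
  haveI : CompactSpace ↥(K n) := isCompact_iff_compactSpace.mp (hKc n)
  exact isCompact_range (stepFun_spec hM K hKc h hc hpos n C).1

/-- The accumulated compact sets. -/
noncomputable def accum : ℕ → {C : Set M // IsCompact C}
  | 0 => ⟨∅, isCompact_empty⟩
  | n + 1 =>
    ⟨(accum n).1 ∪ Set.range (stepFun hM K hKc h hc hpos n (accum n)),
      (accum n).2.union (isCompact_range_stepFun hM K hKc h hc hpos n (accum n))⟩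

/-- The sequence of maps. -/
noncomputable def theF (n : ℕ) : ↥(K n) → M :=
  stepFun hM K hKc h hc hpos n (accum hM K hKc h hc hpos n)

theorem accum_succ (n : ℕ) :
    (accum hM K hKc h hc hpos (n + 1)).1 =
      (accum hM K hKc h hc hpos n).1 ∪ Set.range (theF hM K hKc h hc hpos n) := rfl

theorem accum_mono (n : ℕ) :
    (accum hM K hKc h hc hpos n).1 ⊆ (accum hM K hKc h hc hpos (n + 1)).1 := by
  rw [accum_succ]; exact Set.subset_union_left

theorem range_subset_accum {i n : ℕ} (hin : i < n) :
    Set.range (theF hM K hKc h hc hpos i) ⊆ (accum hM K hKc h hc hpos n).1 := by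
  induction n with
  | zero => omega
  | succ m ih =>
    rcases Nat.lt_succ_iff_lt_or_eq.mp hin with hlt | rfl
    · exact (ih hlt).trans (accum_mono hM K hKc h hc hpos m)
    · rw [accum_succ]; exact Set.subset_union_right

end Seq

theorem stmt14 (M : Type*) [MetricSpace M] [CompleteSpace M]
    [TopologicalSpace.SeparableSpace M] (hM : CompactlyInjective M)
    (K : ℕ → Set M) (hKc : ∀ n, IsCompact (K n)) (hKne : ∀ n, (K n).Nonempty)
    (h : M → ℝ) (hc : Continuous h) (hpos : ∀ x, 0 < h x) :
    ∃ (L : ℕ → Set M) (f : (n : ℕ) → K n → M),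
      (∀ n, IsCompact (L n)) ∧
      (∀ n, Continuous (f n)) ∧
      (∀ n, Set.range (f n) = L n) ∧
      (∀ n (x : K n), dist (x : M) (f n x) = h x) ∧
      (∀ n (x : K n), ∀ y ∈ ⋃ i < n, L i, h (x : M) ≤ dist (f n x) y) := by
  refine ⟨fun n => Set.range (theF hM K hKc h hc hpos n), theF hM K hKc h hc hpos,
    fun n => isCompact_range_stepFun hM K hKc h hc hpos n _,
    fun n => (stepFun_spec hM K hKc h hc hpos n _).1,
    fun n => rfl,
    fun n => (stepFun_spec hM K hKc h hc hpos n _).2.1,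
    ?_⟩
  intro n x y hy
  apply (stepFun_spec hM K hKc h hc hpos n (accum hM K hKc h hc hpos n)).2.2
  right
  simp only [Set.mem_iUnion] at hy
  obtain ⟨i, hin, hyi⟩ := hy
  exact range_subset_accum hM K hKc h hc hpos hin hyi
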